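/- Let n ≥ 2. For every 1 ≤ i ≤ n, the determinant of the leading principal i×i submatrix of N (formed by its first i rows and columns) equals ((21 + 7√3)/30)·((2+√3)/7)^i + ((21 − 7√3)/30)·((2−√3)/7)^i. -/

import Mathlib

/-- The tridiagonal matrix `N` (of size `(n+1) × (n+1)`). -/
noncomputable def Nmat (n : ℕ) : Matrix (Fin (n+1)) (Fin (n+1)) ℝ :=
  Matrix.of fun i j =>
    if i = j then (if i.val = 0 ∨ i.val = n then 3/5 else 4/7)
    else if i.val + 1 = j.val ∨ j.val + 1 = i.val then
      (if min i.val j.val = 0 ∨ max i.val j.val = n then -(1/Real.sqrt 35) else -(1/7))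
    else 0

open Matrix

/-- Uniform tridiagonal entry function. -/
noncomputable def gEnt (i j : ℕ) : ℝ :=
  if i = j then 4/7 else if i + 1 = j ∨ j + 1 = i then -(1/7) else 0

/-- Entry function for the leading block of `N` (independent of `n`). -/
noncomputable def fEnt (i j : ℕ) : ℝ :=
  if i = j then (if i = 0 then 3/5 else 4/7)
  else if i + 1 = j ∨ j + 1 = i then
    (if min i j = 0 then -(1/Real.sqrt 35) else -(1/7)) else 0

noncomputable def Bmat (k : ℕ) : Matrix (Fin k) (Fin k) ℝ :=
  Matrix.of fun i j => gEnt i.val j.val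

noncomputable def Amat (k : ℕ) : Matrix (Fin k) (Fin k) ℝ :=
  Matrix.of fun i j => fEnt i.val j.val

/-- General two-term Laplace expansion for matrices whose first row and
column vanish beyond the second entry. -/
lemma det_tri_expand {k : ℕ} (M : Matrix (Fin (k+2)) (Fin (k+2)) ℝ)
    (h0 : ∀ j : Fin (k+2), 2 ≤ j.val → M 0 j = 0)
    (hc : ∀ i : Fin (k+2), 2 ≤ i.val → M i 0 = 0) :
    M.det = M 0 0 * (M.submatrix Fin.succ Fin.succ).det
      - M 0 1 * M 1 0 *
        ((M.submatrix Fin.succ Fin.succ).submatrix Fin.succ Fin.succ).det := by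
  have hM' : (M.submatrix Fin.succ (Fin.succAbove 1)).submatrix Fin.succ Fin.succ
      = (M.submatrix Fin.succ Fin.succ).submatrix Fin.succ Fin.succ := by
    ext i j
    simp [Matrix.submatrix_apply, Fin.one_succAbove_succ]
  have hdet1 : (M.submatrix Fin.succ (Fin.succAbove 1)).det
      = M 1 0 * ((M.submatrix Fin.succ Fin.succ).submatrix Fin.succ Fin.succ).det := by
    rw [Matrix.det_succ_column_zero, Fin.sum_univ_succ]
    have htail : ∀ i : Fin k,
        (-1 : ℝ) ^ ((i.succ : Fin (k+1)) : ℕ) *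
          (M.submatrix Fin.succ (Fin.succAbove 1)) i.succ 0 *
          ((M.submatrix Fin.succ (Fin.succAbove 1)).submatrix i.succ.succAbove Fin.succ).det
          = 0 := by
      intro i
      have : (M.submatrix Fin.succ (Fin.succAbove 1)) i.succ 0 = 0 := by
        simp only [Matrix.submatrix_apply, Fin.one_succAbove_zero]
        exact hc _ (by simp [Fin.val_succ])
      rw [this]; ring
    rw [Finset.sum_congr rfl (fun i _ => htail i), Finset.sum_const, smul_zero, add_zero]
    simp only [Fin.val_zero, pow_zero, one_mul, Matrix.submatrix_apply,
      Fin.succAbove_zero, Fin.one_succAbove_zero, Fin.succ_zero_eq_one]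
    rw [hM']
  rw [Matrix.det_succ_row_zero, Fin.sum_univ_succ, Fin.sum_univ_succ]
  have htail : ∀ j : Fin k,
      (-1 : ℝ) ^ (((j.succ.succ : Fin (k+2))) : ℕ) * M 0 j.succ.succ *
        (M.submatrix Fin.succ (Fin.succAbove j.succ.succ)).det = 0 := by
    intro j
    rw [h0 _ (by simp [Fin.val_succ])]; ring
  rw [Finset.sum_congr rfl (fun j _ => htail j), Finset.sum_const, smul_zero, add_zero]
  simp only [Fin.succ_zero_eq_one, Fin.succAbove_zero, Fin.val_zero, Fin.val_one,
    pow_zero, pow_one]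
  rw [hdet1]
  ring

lemma Bsub {k : ℕ} : (Bmat (k+1)).submatrix Fin.succ Fin.succ = Bmat k := by
  ext i j
  simp only [Matrix.submatrix_apply, Bmat, Matrix.of_apply, gEnt, Fin.val_succ]
  have h1 : (i.val + 1 = j.val + 1) = (i.val = j.val) := by simp
  rcases eq_or_ne i.val j.val with h | h
  · simp [h]
  · rw [if_neg (by omega), if_neg h]
    by_cases h2 : i.val + 1 = j.val ∨ j.val + 1 = i.val
    · rw [if_pos (by omega), if_pos h2]
    · rw [if_neg (by omega), if_neg h2]

lemma Asub1 {k : ℕ} : (Amat (k+1)).submatrix Fin.succ Fin.succ = Bmat k := by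
  ext i j
  simp only [Matrix.submatrix_apply, Amat, Bmat, Matrix.of_apply, fEnt, gEnt, Fin.val_succ]
  rcases eq_or_ne i.val j.val with h | h
  · rw [if_pos (by omega), if_pos h, if_neg (by omega)]
  · rw [if_neg (by omega), if_neg h]
    by_cases h2 : i.val + 1 = j.val ∨ j.val + 1 = i.val
    · rw [if_pos (by omega), if_pos h2, if_neg (by omega)]
    · rw [if_neg (by omega), if_neg h2]

lemma Bdet_rec (k : ℕ) :
    (Bmat (k+2)).det = 4/7 * (Bmat (k+1)).det - 1/49 * (Bmat k).det := by
  have h := det_tri_expand (Bmat (k+2))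
    (fun j hj => by
      simp only [Bmat, Matrix.of_apply, gEnt, Fin.val_zero]
      split_ifs <;> simp_all <;> omega)
    (fun i hi => by
      simp only [Bmat, Matrix.of_apply, gEnt, Fin.val_zero]
      split_ifs <;> simp_all <;> omega)
  rw [h, Bsub, Bsub]
  have e00 : (Bmat (k+2)) 0 0 = 4/7 := by simp [Bmat, gEnt]
  have e01 : (Bmat (k+2)) 0 1 = -(1/7) := by simp [Bmat, gEnt, Fin.val_one]
  have e10 : (Bmat (k+2)) 1 0 = -(1/7) := by simp [Bmat, gEnt, Fin.val_one]
  rw [e00, e01, e10]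
  ring

lemma Adet_rec (k : ℕ) :
    (Amat (k+2)).det = 3/5 * (Bmat (k+1)).det - 1/35 * (Bmat k).det := by
  have h := det_tri_expand (Amat (k+2))
    (fun j hj => by
      simp only [Amat, Matrix.of_apply, fEnt, Fin.val_zero]
      split_ifs <;> simp_all <;> omega)
    (fun i hi => by
      simp only [Amat, Matrix.of_apply, fEnt, Fin.val_zero]
      split_ifs <;> simp_all <;> omega)
  rw [h, Asub1, Bsub]
  have e00 : (Amat (k+2)) 0 0 = 3/5 := by simp [Amat, fEnt]
  have e01 : (Amat (k+2)) 0 1 = -(1/Real.sqrt 35) := by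
    simp [Amat, fEnt, Fin.val_one]
  have e10 : (Amat (k+2)) 1 0 = -(1/Real.sqrt 35) := by
    simp [Amat, fEnt, Fin.val_one]
  rw [e00, e01, e10]
  have h35 : (1/Real.sqrt 35) * (1/Real.sqrt 35) = 1/35 := by
    rw [div_mul_div_comm, one_mul, Real.mul_self_sqrt (by norm_num)]
  rw [neg_mul_neg, h35]

lemma Bdet_closed (k : ℕ) :
    (Bmat k).det = (3 + 2*Real.sqrt 3)/6 * ((2 + Real.sqrt 3)/7)^k
      + (3 - 2*Real.sqrt 3)/6 * ((2 - Real.sqrt 3)/7)^k := by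
  have ht : Real.sqrt 3 ^ 2 = 3 := Real.sq_sqrt (by norm_num)
  induction k using Nat.strong_induction_on with
  | _ k ih =>
    match k with
    | 0 =>
      rw [Matrix.det_fin_zero]
      ring
    | 1 =>
      rw [show (Bmat 1).det = (Bmat 1) 0 0 from Matrix.det_fin_one _,
        show (Bmat 1) 0 0 = 4/7 by simp [Bmat, gEnt]]
      linear_combination (-2/21) * ht
    | (m+2) =>
      rw [Bdet_rec, ih m (by omega), ih (m+1) (by omega)]
      have hr : ((2 + Real.sqrt 3)/7)^2 = 4/7 * ((2 + Real.sqrt 3)/7) - 1/49 := by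
        linear_combination ht/49
      have hs : ((2 - Real.sqrt 3)/7)^2 = 4/7 * ((2 - Real.sqrt 3)/7) - 1/49 := by
        linear_combination ht/49
      linear_combination (-((3 + 2*Real.sqrt 3)/6) * ((2 + Real.sqrt 3)/7)^m) * hr
        + (-((3 - 2*Real.sqrt 3)/6) * ((2 - Real.sqrt 3)/7)^m) * hs

lemma Adet_closed (k : ℕ) (hk : 1 ≤ k) :
    (Amat k).det = ((21 + 7 * Real.sqrt 3) / 30) * ((2 + Real.sqrt 3) / 7)^k
      + ((21 - 7 * Real.sqrt 3) / 30) * ((2 - Real.sqrt 3) / 7)^k := by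
  have ht : Real.sqrt 3 ^ 2 = 3 := Real.sq_sqrt (by norm_num)
  match k with
  | 1 =>
    rw [show (Amat 1).det = (Amat 1) 0 0 from Matrix.det_fin_one _,
      show (Amat 1) 0 0 = 3/5 by simp [Amat, fEnt]]
    linear_combination (-1/15) * ht
  | (m+2) =>
    rw [Adet_rec, Bdet_closed, Bdet_closed]
    have e1 : ((21 + 7 * Real.sqrt 3) / 30) * ((2 + Real.sqrt 3)/7)^2
        = 3/5 * ((3 + 2*Real.sqrt 3)/6) * ((2 + Real.sqrt 3)/7)
          - 1/35 * ((3 + 2*Real.sqrt 3)/6) := by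
      linear_combination ((Real.sqrt 3 + 1)/210) * ht
    have e2 : ((21 - 7 * Real.sqrt 3) / 30) * ((2 - Real.sqrt 3)/7)^2
        = 3/5 * ((3 - 2*Real.sqrt 3)/6) * ((2 - Real.sqrt 3)/7)
          - 1/35 * ((3 - 2*Real.sqrt 3)/6) := by
      linear_combination ((1 - Real.sqrt 3)/210) * ht
    linear_combination (-(((2 + Real.sqrt 3)/7)^m)) * e1 + (-(((2 - Real.sqrt 3)/7)^m)) * e2

lemma Nsub (n : ℕ) (i : ℕ) (h2 : i ≤ n) :
    (Nmat n).submatrix (Fin.castLE (Nat.le_succ_of_le h2))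
        (Fin.castLE (Nat.le_succ_of_le h2)) = Amat i := by
  ext a b
  have ha : a.val < i := a.isLt
  have hb : b.val < i := b.isLt
  simp only [Matrix.submatrix_apply, Nmat, Amat, Matrix.of_apply, fEnt,
    Fin.castLE, Fin.mk.injEq]
  rcases eq_or_ne a.val b.val with h | h
  · rw [if_pos h, if_pos h]
    rcases eq_or_ne a.val 0 with h0 | h0
    · rw [if_pos (Or.inl h0), if_pos h0]
    · rw [if_neg (by push_neg; exact ⟨h0, by omega⟩), if_neg h0]
  · rw [if_neg h, if_neg h]
    by_cases h2' : a.val + 1 = b.val ∨ b.val + 1 = a.val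
    · rw [if_pos h2', if_pos h2']
      rcases eq_or_ne (min a.val b.val) 0 with hm | hm
      · rw [if_pos (Or.inl hm), if_pos hm]
      · rw [if_neg (by push_neg; exact ⟨hm, by omega⟩), if_neg hm]
    · rw [if_neg h2', if_neg h2']

/-- For `n ≥ 2` and `1 ≤ i ≤ n`, the leading principal `i × i` minor of `N` equals
`((21+7√3)/30)·((2+√3)/7)^i + ((21−7√3)/30)·((2−√3)/7)^i`. -/
theorem det_leading_principal_submatrix_Nmat (n : ℕ) (hn : 2 ≤ n)
    (i : ℕ) (h1 : 1 ≤ i) (h2 : i ≤ n) :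
    ((Nmat n).submatrix (Fin.castLE (show i ≤ n + 1 by omega))
        (Fin.castLE (show i ≤ n + 1 by omega))).det
      = ((21 + 7 * Real.sqrt 3) / 30) * ((2 + Real.sqrt 3) / 7)^i
        + ((21 - 7 * Real.sqrt 3) / 30) * ((2 - Real.sqrt 3) / 7)^i := by
  rw [Nsub n i h2]
  exact Adet_closed i h1
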